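/- Let w ∈ [0,1] and ŵ_N = (1/N) Σ_{k=1}^N 1{A_k} where 1{A_1},...,1{A_N} are i.i.d. Bernoulli(w) indicators. Then for any δ ∈ (0,1), with probability at least 1 − δ, |w − ŵ_N| ≤ sqrt(2 ŵ_N (1 − ŵ_N) log(2/δ)/N) + 7 log(2/δ)/(3(N−1)). -/

import Mathlib

open MeasureTheory ProbabilityTheory Real


set_option maxHeartbeats 2000000

/-- Algebra: if `x > sqrt(2 v β) + 2 β` then `2 β (v + x) < x²`. -/
lemma aux_quad {x v β : ℝ} (hv : 0 ≤ v) (hβ : 0 < β)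
    (h : Real.sqrt (2 * v * β) + 2 * β < x) : 2 * β * (v + x) < x ^ 2 := by
  have hs0 : 0 ≤ Real.sqrt (2 * v * β) := Real.sqrt_nonneg _
  have hs2 : Real.sqrt (2 * v * β) ^ 2 = 2 * v * β := Real.sq_sqrt (by positivity)
  nlinarith [hs0, hs2, h]


lemma kl_lb_upper {w a : ℝ} (hw : 0 < w) (hwa : w < a) (ha : a ≤ 1) :
    (a - w) ^ 2 / (2 * (a * (1 - a) + (a - w))) ≤
      a * Real.log (a / w) + (1 - a) * Real.log ((1 - a) / (1 - w)) := by
  have ha0 : 0 < a := hw.trans hwa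
  rcases eq_or_lt_of_le ha with rfl | ha1
  · have hlw : Real.log w ≤ w - 1 := Real.log_le_sub_one_of_pos hw
    have h1 : (1:ℝ) * Real.log (1 / w) + (1 - 1) * Real.log ((1 - 1) / (1 - w))
        = - Real.log w := by rw [one_div, Real.log_inv]; ring
    rw [h1]
    have hD : (1 - w) ^ 2 / (2 * (1 * (1 - 1) + (1 - w))) = (1 - w) / 2 := by
      have : (1:ℝ) - w ≠ 0 := by linarith
      rw [show (2:ℝ) * (1 * (1 - 1) + (1 - w)) = 2 * (1 - w) by ring, pow_two,
        mul_div_mul_right _ _ this]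
    rw [hD]; linarith
  · set D : ℝ := a * (1 - a) + (a - w) with hDdef
    have hD : 0 < D := by nlinarith
    set g : ℝ → ℝ := fun s => a * (Real.log a - Real.log s)
      + (1 - a) * (Real.log (1 - a) - Real.log (1 - s)) - (a - s) ^ 2 / (2 * D) with hg
    have hderiv : ∀ s ∈ Set.Ioo (0:ℝ) 1,
        HasDerivAt g (-(a / s) + (1 - a) / (1 - s) + (a - s) / D) s := by
      intro s hs
      have hs0 : s ≠ 0 := ne_of_gt hs.1
      have hs1 : (1:ℝ) - s ≠ 0 := by have := hs.2; intro h; linarith [h]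
      have h1 : HasDerivAt (fun s => a * (Real.log a - Real.log s)) (-(a / s)) s := by
        have := ((Real.hasDerivAt_log hs0).const_sub (Real.log a)).const_mul a
        exact this.congr_deriv (by field_simp)
      have h2 : HasDerivAt (fun s => (1 - a) * (Real.log (1 - a) - Real.log (1 - s)))
          ((1 - a) / (1 - s)) s := by
        have hinner : HasDerivAt (fun s : ℝ => 1 - s) (-1) s := by
          simpa using (hasDerivAt_id s).const_sub 1
        have hl : HasDerivAt (fun s : ℝ => Real.log (1 - s)) ((1 - s)⁻¹ * (-1)) s :=
          (Real.hasDerivAt_log hs1).comp s hinner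
        have := (hl.const_sub (Real.log (1 - a))).const_mul (1 - a)
        exact this.congr_deriv (by field_simp)
      have h3 : HasDerivAt (fun s => (a - s) ^ 2 / (2 * D)) (-((a - s) / D) * 2 / 2) s := by
        have hinner : HasDerivAt (fun s : ℝ => a - s) (-1) s := by
          simpa using (hasDerivAt_id s).const_sub a
        have hp : HasDerivAt (fun s : ℝ => (a - s) ^ 2) (2 * (a - s) ^ 1 * (-1)) s :=
          hinner.pow 2
        have := hp.div_const (2 * D)
        exact this.congr_deriv (by field_simp)
      have := (h1.add h2).sub h3
      exact this.congr_deriv (by field_simp; ring)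
    have hsub : Set.Icc w a ⊆ Set.Ioo (0:ℝ) 1 := fun s hs =>
      ⟨lt_of_lt_of_le hw hs.1, lt_of_le_of_lt hs.2 ha1⟩
    have hanti : AntitoneOn g (Set.Icc w a) := by
      apply antitoneOn_of_deriv_nonpos (convex_Icc w a)
      · intro s hs
        exact (hderiv s (hsub hs)).continuousAt.continuousWithinAt
      · intro s hs
        rw [interior_Icc] at hs
        exact (hderiv s (hsub (Set.Ioo_subset_Icc_self hs))).differentiableAt.differentiableWithinAt
      · intro s hs
        rw [interior_Icc] at hs
        have hs' := hsub (Set.Ioo_subset_Icc_self hs)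
        rw [(hderiv s hs').deriv]
        have hs0 : 0 < s := hs'.1
        have hs1 : 0 < 1 - s := by have := hs'.2; linarith
        have hsa : s < a := hs.2
        have hws : w ≤ s := hs.1.le
        -- s(1-s) ≤ D
        have hkey : s * (1 - s) ≤ D := by rw [hDdef]; nlinarith
        have hcomb : -(a / s) + (1 - a) / (1 - s) = (s - a) / (s * (1 - s)) := by
          field_simp; ring
        rw [hcomb]
        have h1 : (a - s) / D ≤ (a - s) / (s * (1 - s)) := by
          apply div_le_div_of_nonneg_left (by linarith) (by positivity) hkey
        have h2 : (s - a) / (s * (1 - s)) = -((a - s) / (s * (1 - s))) := by ring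
        rw [h2]; linarith
    have hga : g a = 0 := by
      rw [hg]; simp
    have := hanti (Set.left_mem_Icc.mpr hwa.le) (Set.right_mem_Icc.mpr hwa.le) hwa.le
    rw [hga] at this
    -- g w ≥ 0
    have hgw : 0 ≤ g w := this
    rw [hg] at hgw
    simp only at hgw
    rw [Real.log_div ha0.ne' hw.ne', Real.log_div (by linarith : (1:ℝ) - a ≠ 0)
      (by linarith : (1:ℝ) - w ≠ 0)]
    rw [hDdef] at hgw
    linarith

lemma kl_lb_lower {w a : ℝ} (ha0 : 0 ≤ a) (haw : a < w) (hw1 : w < 1) :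
    (w - a) ^ 2 / (2 * (a * (1 - a) + (w - a))) ≤
      a * Real.log (a / w) + (1 - a) * Real.log ((1 - a) / (1 - w)) := by
  have hw0 : 0 < w := lt_of_le_of_lt ha0 haw
  rcases eq_or_lt_of_le ha0 with rfl | ha0'
  · have hl : Real.log (1 - w) ≤ (1 - w) - 1 := Real.log_le_sub_one_of_pos (by linarith)
    have h1 : (0:ℝ) * Real.log (0 / w) + (1 - 0) * Real.log ((1 - 0) / (1 - w))
        = - Real.log (1 - w) := by
      rw [show (1:ℝ) - 0 = 1 by ring, one_div, Real.log_inv]; ring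
    rw [h1]
    have hD : (w - 0) ^ 2 / (2 * (0 * (1 - 0) + (w - 0))) = w / 2 := by
      rw [show (2:ℝ) * (0 * (1 - 0) + (w - 0)) = 2 * w by ring, show (w - 0) = w by ring,
        pow_two, mul_div_mul_right _ _ hw0.ne']
    rw [hD]; linarith
  · set D : ℝ := a * (1 - a) + (w - a) with hDdef
    have hD : 0 < D := by nlinarith
    set g : ℝ → ℝ := fun s => a * (Real.log a - Real.log s)
      + (1 - a) * (Real.log (1 - a) - Real.log (1 - s)) - (s - a) ^ 2 / (2 * D) with hg
    have hderiv : ∀ s ∈ Set.Ioo (0:ℝ) 1,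
        HasDerivAt g (-(a / s) + (1 - a) / (1 - s) - (s - a) / D) s := by
      intro s hs
      have hs0 : s ≠ 0 := ne_of_gt hs.1
      have hs1 : (1:ℝ) - s ≠ 0 := by have := hs.2; intro h; linarith [h]
      have h1 : HasDerivAt (fun s => a * (Real.log a - Real.log s)) (-(a / s)) s := by
        have := ((Real.hasDerivAt_log hs0).const_sub (Real.log a)).const_mul a
        exact this.congr_deriv (by field_simp)
      have h2 : HasDerivAt (fun s => (1 - a) * (Real.log (1 - a) - Real.log (1 - s)))
          ((1 - a) / (1 - s)) s := by
        have hinner : HasDerivAt (fun s : ℝ => 1 - s) (-1) s := by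
          simpa using (hasDerivAt_id s).const_sub 1
        have hl : HasDerivAt (fun s : ℝ => Real.log (1 - s)) ((1 - s)⁻¹ * (-1)) s :=
          (Real.hasDerivAt_log hs1).comp s hinner
        have := (hl.const_sub (Real.log (1 - a))).const_mul (1 - a)
        exact this.congr_deriv (by field_simp)
      have h3 : HasDerivAt (fun s => (s - a) ^ 2 / (2 * D)) ((s - a) / D * 2 / 2) s := by
        have hinner : HasDerivAt (fun s : ℝ => s - a) 1 s := by
          simpa using (hasDerivAt_id s).sub_const a
        have hp : HasDerivAt (fun s : ℝ => (s - a) ^ 2) (2 * (s - a) ^ 1 * 1) s :=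
          hinner.pow 2
        have := hp.div_const (2 * D)
        exact this.congr_deriv (by field_simp)
      have := (h1.add h2).sub h3
      exact this.congr_deriv (by field_simp)
    have hsub : Set.Icc a w ⊆ Set.Ioo (0:ℝ) 1 := fun s hs =>
      ⟨lt_of_lt_of_le ha0' hs.1, lt_of_le_of_lt hs.2 hw1⟩
    have hmono : MonotoneOn g (Set.Icc a w) := by
      apply monotoneOn_of_deriv_nonneg (convex_Icc a w)
      · intro s hs
        exact (hderiv s (hsub hs)).continuousAt.continuousWithinAt
      · intro s hs
        rw [interior_Icc] at hs
        exact (hderiv s (hsub (Set.Ioo_subset_Icc_self hs))).differentiableAt.differentiableWithinAt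
      · intro s hs
        rw [interior_Icc] at hs
        have hs' := hsub (Set.Ioo_subset_Icc_self hs)
        rw [(hderiv s hs').deriv]
        have hs0 : 0 < s := hs'.1
        have hs1 : 0 < 1 - s := by have := hs'.2; linarith
        have hsa : a < s := hs.1
        have hws : s ≤ w := hs.2.le
        have hkey : s * (1 - s) ≤ D := by rw [hDdef]; nlinarith
        have hcomb : -(a / s) + (1 - a) / (1 - s) = (s - a) / (s * (1 - s)) := by
          field_simp; ring
        rw [hcomb]
        have h1 : (s - a) / D ≤ (s - a) / (s * (1 - s)) := by
          apply div_le_div_of_nonneg_left (by linarith) (by positivity) hkey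
        linarith
    have hga : g a = 0 := by rw [hg]; simp
    have := hmono (Set.left_mem_Icc.mpr haw.le) (Set.right_mem_Icc.mpr haw.le) haw.le
    rw [hga] at this
    have hgw : 0 ≤ g w := this
    rw [hg] at hgw
    simp only at hgw
    rw [Real.log_div (ne_of_gt ha0') hw0.ne', Real.log_div (by linarith : (1:ℝ) - a ≠ 0)
      (by linarith : (1:ℝ) - w ≠ 0)]
    rw [hDdef] at hgw
    linarith


section chern
variable {N : ℕ} {Ω : Type*} [MeasurableSpace Ω] {P : Measure Ω} [IsProbabilityMeasure P]
  {Z : Fin N → Ω → ℝ} {w : ℝ}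

lemma bern_mgf_sum (hmeas : ∀ k, Measurable (Z k)) (hber : ∀ k, ∀ ω, Z k ω = 0 ∨ Z k ω = 1)
    (hiid : iIndepFun Z P) (hmean : ∀ k, ∫ ω, Z k ω ∂P = w)
    (t : ℝ) : mgf (fun ω => ∑ k, Z k ω) P t = (1 + (Real.exp t - 1) * w) ^ N := by
  have hint : ∀ k, Integrable (Z k) P := by
    intro k
    refine (integrable_const (1:ℝ)).mono' (hmeas k).aestronglyMeasurable ?_
    filter_upwards with ω
    rcases hber k ω with h | h <;> simp [h]
  have hone : ∀ k, mgf (Z k) P t = 1 + (Real.exp t - 1) * w := by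
    intro k
    have heq : (fun ω => Real.exp (t * Z k ω)) = fun ω => 1 + (Real.exp t - 1) * Z k ω := by
      funext ω
      rcases hber k ω with h | h <;> simp [h] <;> ring
    rw [mgf]
    simp only [heq]
    rw [integral_add (integrable_const 1) ((hint k).const_mul _)]
    rw [integral_const, integral_const_mul, hmean k]
    simp
  have hfun : (fun ω => ∑ k, Z k ω) = ∑ k, Z k := by
    funext ω; simp
  rw [hfun, hiid.mgf_sum hmeas]
  simp [hone, Finset.prod_const]

lemma bern_exp_int (hmeas : ∀ k, Measurable (Z k)) (hber : ∀ k, ∀ ω, Z k ω = 0 ∨ Z k ω = 1)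
    (t : ℝ) : Integrable (fun ω => Real.exp (t * ∑ k, Z k ω)) P := by
  have hb : ∀ ω, 0 ≤ ∑ k, Z k ω ∧ ∑ k, Z k ω ≤ N := by
    intro ω
    constructor
    · exact Finset.sum_nonneg fun k _ => by rcases hber k ω with h | h <;> simp [h]
    · calc ∑ k, Z k ω ≤ ∑ _k : Fin N, (1:ℝ) :=
            Finset.sum_le_sum fun k _ => by rcases hber k ω with h | h <;> simp [h]
        _ = N := by simp
  refine (integrable_const (Real.exp (|t| * N))).mono' ?_ ?_
  · exact ((Finset.measurable_sum Finset.univ fun k _ => hmeas k).const_mul t).exp.aestronglyMeasurable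
  · filter_upwards with ω
    rw [Real.norm_eq_abs, Real.abs_exp]
    apply Real.exp_le_exp.mpr
    have h1 := (hb ω).1; have h2 := (hb ω).2
    calc t * ∑ k, Z k ω ≤ |t * ∑ k, Z k ω| := le_abs_self _
      _ = |t| * |∑ k, Z k ω| := abs_mul _ _
      _ ≤ |t| * N := by
          apply mul_le_mul_of_nonneg_left _ (abs_nonneg t)
          rw [abs_of_nonneg h1]; exact h2

lemma bern_chernoff_up (hmeas : ∀ k, Measurable (Z k)) (hber : ∀ k, ∀ ω, Z k ω = 0 ∨ Z k ω = 1)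
    (hiid : iIndepFun Z P) (hmean : ∀ k, ∫ ω, Z k ω ∂P = w)
    (hw0 : 0 < w) (hw1 : w < 1) {a : ℝ} (hwa : w < a) (ha1 : a ≤ 1) :
    P {ω | a * N ≤ ∑ k, Z k ω} ≤ ENNReal.ofReal
      (Real.exp (-(N:ℝ) * (a * Real.log (a / w) + (1 - a) * Real.log ((1 - a) / (1 - w))))) := by
  have key : ∀ t : ℝ, 0 ≤ t → (P {ω | a * N ≤ ∑ k, Z k ω}).toReal ≤
      Real.exp (-t * (a * N)) * (1 + (Real.exp t - 1) * w) ^ N := by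
    intro t ht
    have := measure_ge_le_exp_mul_mgf (X := fun ω => ∑ k, Z k ω) (μ := P) (a * N) ht
      (bern_exp_int hmeas hber t)
    rwa [bern_mgf_sum hmeas hber hiid hmean t] at this
  have ha0 : 0 < a := hw0.trans hwa
  have hfin : (P {ω | a * N ≤ ∑ k, Z k ω}).toReal ≤
      Real.exp (-(N:ℝ) * (a * Real.log (a / w) + (1 - a) * Real.log ((1 - a) / (1 - w)))) := by
    rcases eq_or_lt_of_le ha1 with rfl | ha1'
    · -- a = 1 : limit argument
      have hrw : ∀ t : ℝ, Real.exp (-t * (1 * N)) * (1 + (Real.exp t - 1) * w) ^ N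
          = (w + (1 - w) * Real.exp (-t)) ^ N := by
        intro t
        have h1 : Real.exp (-t * (1 * N)) = (Real.exp (-t)) ^ N := by
          rw [show -t * (1 * (N:ℝ)) = (N:ℝ) * (-t) by ring, Real.exp_nat_mul]
        rw [h1, ← mul_pow]
        congr 1
        have he : Real.exp (-t) * Real.exp t = 1 := by rw [← Real.exp_add]; simp
        nlinarith [he]
      have hlim : Filter.Tendsto (fun t : ℝ => (w + (1 - w) * Real.exp (-t)) ^ N)
          Filter.atTop (nhds (w ^ N)) := by
        have h0 : Filter.Tendsto (fun t : ℝ => w + (1 - w) * Real.exp (-t))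
            Filter.atTop (nhds w) := by
          have := Real.tendsto_exp_neg_atTop_nhds_zero.const_mul (1 - w)
          simpa using (this.const_add w)
        exact h0.pow N
      have hle : (P {ω | (1:ℝ) * N ≤ ∑ k, Z k ω}).toReal ≤ w ^ N := by
        refine ge_of_tendsto hlim ?_
        filter_upwards [Filter.eventually_ge_atTop 0] with t ht
        rw [← hrw t]; exact key t ht
      have hkl : -(N:ℝ) * (1 * Real.log (1 / w) + (1 - 1) * Real.log ((1 - 1) / (1 - w)))
          = (N:ℝ) * Real.log w := by
        rw [one_div, Real.log_inv]; ring
      rw [hkl, Real.exp_nat_mul, Real.exp_log hw0]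
      exact hle
    · set t0 := Real.log (a * (1 - w) / (w * (1 - a))) with ht0def
      have h1a : 0 < 1 - a := by linarith
      have h1w : 0 < 1 - w := by linarith
      have hrpos : 0 < a * (1 - w) / (w * (1 - a)) := by positivity
      have hr1 : 1 ≤ a * (1 - w) / (w * (1 - a)) := by
        rw [le_div_iff₀ (by positivity)]; nlinarith
      have ht0 : 0 ≤ t0 := Real.log_nonneg hr1
      have hexp : Real.exp t0 = a * (1 - w) / (w * (1 - a)) := Real.exp_log hrpos
      have hmgf1 : 1 + (Real.exp t0 - 1) * w = (1 - w) / (1 - a) := by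
        rw [hexp]; field_simp; ring
      have hkey := key t0 ht0
      rw [hmgf1] at hkey
      have hpow : ((1 - w) / (1 - a)) ^ N = Real.exp ((N:ℝ) * Real.log ((1 - w) / (1 - a))) := by
        rw [Real.exp_nat_mul, Real.exp_log (by positivity)]
      rw [hpow, ← Real.exp_add] at hkey
      have hid : -t0 * (a * N) + (N:ℝ) * Real.log ((1 - w) / (1 - a))
          = -(N:ℝ) * (a * Real.log (a / w) + (1 - a) * Real.log ((1 - a) / (1 - w))) := by
        rw [ht0def, Real.log_div (by positivity) (by positivity),
          Real.log_mul ha0.ne' h1w.ne', Real.log_mul hw0.ne' h1a.ne',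
          Real.log_div h1w.ne' h1a.ne', Real.log_div ha0.ne' hw0.ne',
          Real.log_div h1a.ne' h1w.ne']
        ring
      rw [hid] at hkey
      exact hkey
  calc P {ω | a * N ≤ ∑ k, Z k ω}
      = ENNReal.ofReal (P {ω | a * N ≤ ∑ k, Z k ω}).toReal :=
        (ENNReal.ofReal_toReal (measure_ne_top P _)).symm
    _ ≤ _ := ENNReal.ofReal_le_ofReal hfin

lemma bern_chernoff_down (hmeas : ∀ k, Measurable (Z k)) (hber : ∀ k, ∀ ω, Z k ω = 0 ∨ Z k ω = 1)
    (hiid : iIndepFun Z P) (hmean : ∀ k, ∫ ω, Z k ω ∂P = w)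
    (hw0 : 0 < w) (hw1 : w < 1) {a : ℝ} (ha0 : 0 ≤ a) (haw : a < w) :
    P {ω | ∑ k, Z k ω ≤ a * N} ≤ ENNReal.ofReal
      (Real.exp (-(N:ℝ) * (a * Real.log (a / w) + (1 - a) * Real.log ((1 - a) / (1 - w))))) := by
  have key : ∀ t : ℝ, t ≤ 0 → (P {ω | ∑ k, Z k ω ≤ a * N}).toReal ≤
      Real.exp (-t * (a * N)) * (1 + (Real.exp t - 1) * w) ^ N := by
    intro t ht
    have := measure_le_le_exp_mul_mgf (X := fun ω => ∑ k, Z k ω) (μ := P) (a * N) ht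
      (bern_exp_int hmeas hber t)
    rwa [bern_mgf_sum hmeas hber hiid hmean t] at this
  have ha1 : a < 1 := haw.trans hw1
  have h1a : 0 < 1 - a := by linarith
  have h1w : 0 < 1 - w := by linarith
  have hfin : (P {ω | ∑ k, Z k ω ≤ a * N}).toReal ≤
      Real.exp (-(N:ℝ) * (a * Real.log (a / w) + (1 - a) * Real.log ((1 - a) / (1 - w)))) := by
    rcases eq_or_lt_of_le ha0 with rfl | ha0'
    · -- a = 0 : limit argument
      have hrw : ∀ t : ℝ, Real.exp (-t * (0 * N)) * (1 + (Real.exp t - 1) * w) ^ N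
          = (1 - w + w * Real.exp t) ^ N := by
        intro t; rw [show -t * (0 * (N:ℝ)) = 0 by ring, Real.exp_zero, one_mul]
        congr 1; ring
      have hlim : Filter.Tendsto (fun t : ℝ => (1 - w + w * Real.exp t) ^ N)
          Filter.atBot (nhds ((1 - w) ^ N)) := by
        have h0 : Filter.Tendsto (fun t : ℝ => 1 - w + w * Real.exp t)
            Filter.atBot (nhds (1 - w)) := by
          have := Real.tendsto_exp_atBot.const_mul w
          simpa using (this.const_add (1 - w))
        exact h0.pow N
      have hle : (P {ω | ∑ k, Z k ω ≤ 0 * N}).toReal ≤ (1 - w) ^ N := by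
        refine ge_of_tendsto hlim ?_
        filter_upwards [Filter.eventually_le_atBot 0] with t ht
        rw [← hrw t]; exact key t ht
      have hkl : -(N:ℝ) * (0 * Real.log (0 / w) + (1 - 0) * Real.log ((1 - 0) / (1 - w)))
          = (N:ℝ) * Real.log (1 - w) := by
        rw [show (1:ℝ) - 0 = 1 by ring, one_div, Real.log_inv]; ring
      rw [hkl, Real.exp_nat_mul, Real.exp_log h1w]
      exact hle
    · set t0 := Real.log (a * (1 - w) / (w * (1 - a))) with ht0def
      have hrpos : 0 < a * (1 - w) / (w * (1 - a)) := by positivity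
      have hr1 : a * (1 - w) / (w * (1 - a)) ≤ 1 := by
        rw [div_le_one (by positivity)]; nlinarith
      have ht0 : t0 ≤ 0 := Real.log_nonpos (le_of_lt hrpos) hr1
      have hexp : Real.exp t0 = a * (1 - w) / (w * (1 - a)) := Real.exp_log hrpos
      have hmgf1 : 1 + (Real.exp t0 - 1) * w = (1 - w) / (1 - a) := by
        rw [hexp]; field_simp; ring
      have hkey := key t0 ht0
      rw [hmgf1] at hkey
      have hpow : ((1 - w) / (1 - a)) ^ N = Real.exp ((N:ℝ) * Real.log ((1 - w) / (1 - a))) := by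
        rw [Real.exp_nat_mul, Real.exp_log (by positivity)]
      rw [hpow, ← Real.exp_add] at hkey
      have hid : -t0 * (a * N) + (N:ℝ) * Real.log ((1 - w) / (1 - a))
          = -(N:ℝ) * (a * Real.log (a / w) + (1 - a) * Real.log ((1 - a) / (1 - w))) := by
        rw [ht0def, Real.log_div (by positivity) (by positivity),
          Real.log_mul (ne_of_gt ha0') h1w.ne', Real.log_mul hw0.ne' h1a.ne',
          Real.log_div h1w.ne' h1a.ne', Real.log_div (ne_of_gt ha0') hw0.ne',
          Real.log_div h1a.ne' h1w.ne']
        ring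
      rw [hid] at hkey
      exact hkey
  calc P {ω | ∑ k, Z k ω ≤ a * N}
      = ENNReal.ofReal (P {ω | ∑ k, Z k ω ≤ a * N}).toReal :=
        (ENNReal.ofReal_toReal (measure_ne_top P _)).symm
    _ ≤ _ := ENNReal.ofReal_le_ofReal hfin

end chern

/-- empirical Bernstein (Maurer–Pontil) bound for i.i.d. Bernoulli(w)
indicators: with probability at least `1 - δ`,
`|w - ŵ_N| ≤ sqrt(2 ŵ_N (1-ŵ_N) log(2/δ)/N) + 7 log(2/δ)/(3(N-1))`. -/
theorem stmt4 {N : ℕ} (hN : 2 ≤ N)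
    {Ω : Type*} [MeasurableSpace Ω] (P : Measure Ω) [IsProbabilityMeasure P]
    (Z : Fin N → Ω → ℝ)
    (hmeas : ∀ k, Measurable (Z k))
    (hber : ∀ k, ∀ ω, Z k ω = 0 ∨ Z k ω = 1)
    (hiid : iIndepFun Z P)
    (w : ℝ) (hw0 : 0 ≤ w) (hw1 : w ≤ 1)
    (hmean : ∀ k, ∫ ω, Z k ω ∂P = w)
    (δ : ℝ) (hδ : δ ∈ Set.Ioo (0 : ℝ) 1) :
    ENNReal.ofReal (1 - δ) ≤
      P {ω | |w - (1 / (N : ℝ)) * ∑ k, Z k ω| ≤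
        Real.sqrt (2 * ((1 / (N : ℝ)) * ∑ k, Z k ω)
            * (1 - (1 / (N : ℝ)) * ∑ k, Z k ω) * Real.log (2 / δ) / N)
          + 7 * Real.log (2 / δ) / (3 * (N - 1))} := by

  classical
  obtain ⟨hδ0, hδ1⟩ := hδ
  have hN2 : (2:ℝ) ≤ N := by exact_mod_cast hN
  have hN0 : (0:ℝ) < N := by linarith
  have hN1 : (1:ℝ) ≤ (N:ℝ) - 1 := by linarith
  set L := Real.log (2 / δ) with hLdef
  have hL0 : 0 < L := Real.log_pos (by rw [lt_div_iff₀ hδ0]; linarith)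
  set c := 7 * L / (3 * ((N:ℝ) - 1)) with hcdef
  have hc0 : 0 < c := by
    rw [hcdef]; apply div_pos (by linarith) (by linarith)
  set β := L / (N:ℝ) with hβdef
  have hβ0 : 0 < β := div_pos hL0 hN0
  have hc2β : 2 * β ≤ c := by
    rw [hcdef, hβdef]
    rw [show 2 * (L / (N:ℝ)) = 2 * L / (N:ℝ) by ring,
      div_le_div_iff₀ (by linarith) (by linarith)]
    nlinarith
  set G := {ω | |w - (1 / (N : ℝ)) * ∑ k, Z k ω| ≤
        Real.sqrt (2 * ((1 / (N : ℝ)) * ∑ k, Z k ω)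
            * (1 - (1 / (N : ℝ)) * ∑ k, Z k ω) * L / N) + c} with hGdef
  -- final reduction
  have final : P Gᶜ ≤ ENNReal.ofReal δ → ENNReal.ofReal (1 - δ) ≤ P G := by
    intro h
    have h1 : (1:ENNReal) ≤ P G + P Gᶜ := by
      rw [← measure_univ (μ := P), ← Set.union_compl_self G]
      exact measure_union_le _ _
    have h3 : ENNReal.ofReal (1 - δ) + ENNReal.ofReal δ = 1 := by
      rw [← ENNReal.ofReal_add (by linarith) (by linarith)]
      norm_num
    have h2 : ENNReal.ofReal (1 - δ) + ENNReal.ofReal δ ≤ P G + ENNReal.ofReal δ := by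
      rw [h3]; exact h1.trans (add_le_add le_rfl h)
    exact (ENNReal.add_le_add_iff_right ENNReal.ofReal_ne_top).mp h2
  -- counting lemma
  have hcount : ∀ ω, ∃ m : ℕ, m ≤ N ∧ ∑ k, Z k ω = m := by
    intro ω
    refine ⟨(Finset.univ.filter (fun k => Z k ω = 1)).card, ?_, ?_⟩
    · exact (Finset.card_filter_le _ _).trans (by simp)
    · rw [Finset.card_filter]
      push_cast
      refine Finset.sum_congr rfl fun k _ => ?_
      rcases hber k ω with h | h <;> simp [h]
  -- degenerate case w = 0
  rcases eq_or_lt_of_le hw0 with rfl | hw0'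
  · apply final
    have hz : ∀ᵐ ω ∂P, ∀ k, Z k ω = 0 := by
      rw [MeasureTheory.ae_all_iff]
      intro k
      have hint : Integrable (Z k) P := by
        refine (integrable_const (1:ℝ)).mono' (hmeas k).aestronglyMeasurable ?_
        filter_upwards with ω
        rcases hber k ω with h | h <;> simp [h]
      have hnn : 0 ≤ᵐ[P] Z k := by
        filter_upwards with ω
        rcases hber k ω with h | h <;> simp [h]
      have := (MeasureTheory.integral_eq_zero_iff_of_nonneg_ae hnn hint).mp (hmean k)
      filter_upwards [this] with ω hω using hω
    have hae : ∀ᵐ ω ∂P, ω ∈ G := by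
      filter_upwards [hz] with ω hω
      rw [hGdef, Set.mem_setOf_eq]
      have hs : ∑ k, Z k ω = 0 := Finset.sum_eq_zero fun k _ => hω k
      rw [hs]
      have hL1 : |(0:ℝ) - 1 / (N:ℝ) * 0| = 0 := by norm_num
      rw [hL1]
      exact add_nonneg (Real.sqrt_nonneg _) hc0.le
    have hcz : P Gᶜ = 0 := by
      rw [MeasureTheory.ae_iff] at hae
      rw [Set.compl_def]
      exact hae
    rw [hcz]; exact zero_le
    -- degenerate case w = 1
  rcases eq_or_lt_of_le hw1 with rfl | hw1'
  · apply final
    have hz : ∀ᵐ ω ∂P, ∀ k, Z k ω = 1 := by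
      rw [MeasureTheory.ae_all_iff]
      intro k
      have hint : Integrable (Z k) P := by
        refine (integrable_const (1:ℝ)).mono' (hmeas k).aestronglyMeasurable ?_
        filter_upwards with ω
        rcases hber k ω with h | h <;> simp [h]
      have hnn : 0 ≤ᵐ[P] (fun ω => 1 - Z k ω) := by
        filter_upwards with ω
        rcases hber k ω with h | h <;> simp [h]
      have hint2 : Integrable (fun ω => 1 - Z k ω) P := (integrable_const 1).sub hint
      have hz0 : ∫ ω, (1 - Z k ω) ∂P = 0 := by
        rw [integral_sub (integrable_const 1) hint, hmean k, integral_const]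
        simp
      have := (MeasureTheory.integral_eq_zero_iff_of_nonneg_ae hnn hint2).mp hz0
      filter_upwards [this] with ω hω
      have : 1 - Z k ω = 0 := hω
      linarith
    have hae : ∀ᵐ ω ∂P, ω ∈ G := by
      filter_upwards [hz] with ω hω
      rw [hGdef, Set.mem_setOf_eq]
      have hs : ∑ k, Z k ω = N := by
        rw [Finset.sum_congr rfl fun k _ => hω k]
        simp
      rw [hs]
      have hval : (1 / (N:ℝ)) * (N:ℝ) = 1 := by field_simp
      rw [hval]
      have hL1 : |(1:ℝ) - 1| = 0 := by norm_num
      rw [hL1]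
      exact add_nonneg (Real.sqrt_nonneg _) hc0.le
    have hcz : P Gᶜ = 0 := by
      rw [MeasureTheory.ae_iff] at hae
      rw [Set.compl_def]
      exact hae
    rw [hcz]; exact zero_le
  -- main case 0 < w < 1
  have hδ2 : Real.exp (-(N:ℝ) * β) = δ / 2 := by
    rw [hβdef, show -(N:ℝ) * (L / N) = -L by field_simp, hLdef, Real.exp_neg,
      Real.exp_log (by positivity), inv_div]
  have main_up : ∃ U : Set Ω,
      (∀ ω, ω ∉ G → w < (1/(N:ℝ)) * ∑ k, Z k ω → ω ∈ U) ∧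
      P U ≤ ENNReal.ofReal (δ/2) := by
    set Bup := (Finset.range (N+1)).filter (fun m : ℕ => w < (m:ℝ)/N ∧
      ¬ (|w - (m:ℝ)/N| ≤ Real.sqrt (2 * ((m:ℝ)/N) * (1 - (m:ℝ)/N) * L / N) + c))
      with hBup
    have hmemBup : ∀ ω, ω ∉ G → w < (1/(N:ℝ)) * ∑ k, Z k ω →
        ∀ m : ℕ, m ≤ N → ∑ k, Z k ω = m → m ∈ Bup := by
      intro ω hωG hωgt m hmN hms
      have hval : (1/(N:ℝ)) * ∑ k, Z k ω = (m:ℝ)/N := by rw [hms]; ring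
      rw [hBup, Finset.mem_filter, Finset.mem_range]
      refine ⟨by omega, by rw [← hval]; exact hωgt, ?_⟩
      intro hcontra
      apply hωG
      rw [hGdef, Set.mem_setOf_eq, hval]
      exact hcontra
    rcases Bup.eq_empty_or_nonempty with hBe | hBne
    · refine ⟨∅, ?_, by simp⟩
      intro ω hωG hωgt
      obtain ⟨m, hmN, hms⟩ := hcount ω
      have hmem := hmemBup ω hωG hωgt m hmN hms
      rw [hBe] at hmem
      exact absurd hmem (Finset.notMem_empty m)
    · set m0 := Bup.min' hBne with hm0
      obtain ⟨hm0N', hm0gt, hm0bad⟩ := Finset.mem_filter.mp (Bup.min'_mem hBne)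
      have hm0N : m0 < N + 1 := Finset.mem_range.mp hm0N'
      set a := (m0:ℝ)/N with ha
      have haN : a ≤ 1 := by
        rw [ha, div_le_one hN0]
        exact_mod_cast Nat.lt_succ_iff.mp hm0N
      have ha0 : 0 < a := lt_trans hw0' hm0gt
      have hav : 0 ≤ a * (1-a) := mul_nonneg ha0.le (by linarith)
      have hx : Real.sqrt (2 * (a*(1-a)) * β) + 2*β < a - w := by
        push_neg at hm0bad
        have habs : |w - a| = a - w := by
          rw [abs_of_neg (by linarith : w - a < 0)]; ring
        have hsq : Real.sqrt (2 * a * (1-a) * L / (N:ℝ))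
            = Real.sqrt (2*(a*(1-a))*β) := by
          rw [hβdef]; congr 1; ring
        rw [habs, hsq] at hm0bad
        linarith
      have hxpos : 0 < a - w := by
        have := Real.sqrt_nonneg (2 * (a*(1-a)) * β)
        linarith
      have hquad := aux_quad hav hβ0 hx
      have hklb : β ≤ a * Real.log (a/w) + (1-a)*Real.log ((1-a)/(1-w)) := by
        have hdpos : 0 < 2*(a*(1-a) + (a-w)) := by nlinarith
        have h2 : β < (a-w)^2 / (2*(a*(1-a) + (a-w))) := by
          rw [lt_div_iff₀ hdpos]; nlinarith
        exact h2.le.trans (kl_lb_upper hw0' hm0gt haN)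
      refine ⟨{ω | a * N ≤ ∑ k, Z k ω}, ?_, ?_⟩
      · intro ω hωG hωgt
        obtain ⟨m, hmN, hms⟩ := hcount ω
        have hmem := hmemBup ω hωG hωgt m hmN hms
        have hle : m0 ≤ m := Finset.min'_le _ _ hmem
        rw [Set.mem_setOf_eq, hms, ha, div_mul_cancel₀ _ hN0.ne']
        exact_mod_cast hle
      · calc P {ω | a * N ≤ ∑ k, Z k ω}
            ≤ ENNReal.ofReal (Real.exp (-(N:ℝ) *
              (a * Real.log (a/w) + (1-a)*Real.log ((1-a)/(1-w))))) :=
              bern_chernoff_up hmeas hber hiid hmean hw0' hw1' hm0gt haN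
          _ ≤ ENNReal.ofReal (δ/2) := by
              apply ENNReal.ofReal_le_ofReal
              rw [← hδ2]
              apply Real.exp_le_exp.mpr
              nlinarith
  have main_down : ∃ D : Set Ω,
      (∀ ω, ω ∉ G → (1/(N:ℝ)) * ∑ k, Z k ω < w → ω ∈ D) ∧
      P D ≤ ENNReal.ofReal (δ/2) := by
    set Bdn := (Finset.range (N+1)).filter (fun m : ℕ => (m:ℝ)/N < w ∧
      ¬ (|w - (m:ℝ)/N| ≤ Real.sqrt (2 * ((m:ℝ)/N) * (1 - (m:ℝ)/N) * L / N) + c))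
      with hBdn
    have hmemBdn : ∀ ω, ω ∉ G → (1/(N:ℝ)) * ∑ k, Z k ω < w →
        ∀ m : ℕ, m ≤ N → ∑ k, Z k ω = m → m ∈ Bdn := by
      intro ω hωG hωlt m hmN hms
      have hval : (1/(N:ℝ)) * ∑ k, Z k ω = (m:ℝ)/N := by rw [hms]; ring
      rw [hBdn, Finset.mem_filter, Finset.mem_range]
      refine ⟨by omega, by rw [← hval]; exact hωlt, ?_⟩
      intro hcontra
      apply hωG
      rw [hGdef, Set.mem_setOf_eq, hval]
      exact hcontra
    rcases Bdn.eq_empty_or_nonempty with hBe | hBne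
    · refine ⟨∅, ?_, by simp⟩
      intro ω hωG hωlt
      obtain ⟨m, hmN, hms⟩ := hcount ω
      have hmem := hmemBdn ω hωG hωlt m hmN hms
      rw [hBe] at hmem
      exact absurd hmem (Finset.notMem_empty m)
    · set m0 := Bdn.max' hBne with hm0
      obtain ⟨hm0N', hm0lt, hm0bad⟩ := Finset.mem_filter.mp (Bdn.max'_mem hBne)
      have hm0N : m0 < N + 1 := Finset.mem_range.mp hm0N'
      set a := (m0:ℝ)/N with ha
      have ha0 : 0 ≤ a := by positivity
      have haN : a ≤ 1 := by
        rw [ha, div_le_one hN0]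
        exact_mod_cast Nat.lt_succ_iff.mp hm0N
      have hav : 0 ≤ a * (1-a) := mul_nonneg ha0 (by linarith)
      have hx : Real.sqrt (2 * (a*(1-a)) * β) + 2*β < w - a := by
        push_neg at hm0bad
        have habs : |w - a| = w - a := abs_of_pos (by linarith : 0 < w - a)
        have hsq : Real.sqrt (2 * a * (1-a) * L / (N:ℝ))
            = Real.sqrt (2*(a*(1-a))*β) := by
          rw [hβdef]; congr 1; ring
        rw [habs, hsq] at hm0bad
        linarith
      have hxpos : 0 < w - a := by
        have := Real.sqrt_nonneg (2 * (a*(1-a)) * β)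
        linarith
      have hquad := aux_quad hav hβ0 hx
      have hklb : β ≤ a * Real.log (a/w) + (1-a)*Real.log ((1-a)/(1-w)) := by
        have hdpos : 0 < 2*(a*(1-a) + (w-a)) := by nlinarith
        have h2 : β < (w-a)^2 / (2*(a*(1-a) + (w-a))) := by
          rw [lt_div_iff₀ hdpos]; nlinarith
        exact h2.le.trans (kl_lb_lower ha0 hm0lt hw1')
      refine ⟨{ω | ∑ k, Z k ω ≤ a * N}, ?_, ?_⟩
      · intro ω hωG hωlt
        obtain ⟨m, hmN, hms⟩ := hcount ω
        have hmem := hmemBdn ω hωG hωlt m hmN hms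
        have hle : m ≤ m0 := Finset.le_max' _ _ hmem
        rw [Set.mem_setOf_eq, hms, ha, div_mul_cancel₀ _ hN0.ne']
        exact_mod_cast hle
      · calc P {ω | ∑ k, Z k ω ≤ a * N}
            ≤ ENNReal.ofReal (Real.exp (-(N:ℝ) *
              (a * Real.log (a/w) + (1-a)*Real.log ((1-a)/(1-w))))) :=
              bern_chernoff_down hmeas hber hiid hmean hw0' hw1' ha0 hm0lt
          _ ≤ ENNReal.ofReal (δ/2) := by
              apply ENNReal.ofReal_le_ofReal
              rw [← hδ2]
              apply Real.exp_le_exp.mpr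
              nlinarith
  obtain ⟨U, hU1, hU2⟩ := main_up
  obtain ⟨D, hD1, hD2⟩ := main_down
  apply final
  have hsub : Gᶜ ⊆ U ∪ D := by
    intro ω hω
    rw [Set.mem_compl_iff] at hω
    have hne : (1/(N:ℝ)) * ∑ k, Z k ω ≠ w := by
      intro heq
      apply hω
      rw [hGdef, Set.mem_setOf_eq, heq]
      have hL1 : |w - w| = 0 := by norm_num
      rw [hL1]
      exact add_nonneg (Real.sqrt_nonneg _) hc0.le
    rcases lt_or_gt_of_ne hne with hlt | hgt
    · exact Or.inr (hD1 ω hω hlt)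
    · exact Or.inl (hU1 ω hω hgt)
  calc P Gᶜ ≤ P (U ∪ D) := measure_mono hsub
    _ ≤ P U + P D := measure_union_le _ _
    _ ≤ ENNReal.ofReal (δ/2) + ENNReal.ofReal (δ/2) := add_le_add hU2 hD2
    _ = ENNReal.ofReal δ := by
        rw [← ENNReal.ofReal_add (by positivity) (by positivity)]
        norm_num
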